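/- Let T be an ORB-tree with n leaves, S its covariance matrix, Φ its Haar-like matrix, and ζ the fraction of vanishing entries of Φ'SΦ. Then ζ ≥ 1 + 1/|L| − 2·avg(T̊)/|T̊| = 1 − 1/|L| − 2·TPL(T̊)/|T̊|², where T̊ is the interior of T (the tree obtained by removing the leaves of T), which has |T̊| = n vertices. -/

import Mathlib

open Finset

noncomputable section
open scoped Classical

/-- A finite rooted tree on vertices `Fin n`, given by a parent function:
every vertex reaches the root by iterating `parent`, and the root is its own parent. -/
structure RTree where
  n : ℕ
  npos : 0 < n
  root : Fin n
  parent : Fin n → Fin n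
  parent_root : parent root = root
  reach : ∀ v, ∃ k, parent^[k] v = root

namespace RTree

variable (T : RTree)

/-- `u` is an ancestor of `v` (every vertex is an ancestor of itself). -/
def Anc (u v : Fin T.n) : Prop := ∃ k, T.parent^[k] v = u

/-- The children of a vertex. -/
def children (v : Fin T.n) : Finset (Fin T.n) :=
  Finset.univ.filter fun u => T.parent u = v ∧ u ≠ T.root

def IsLeaf (v : Fin T.n) : Prop := T.children v = ∅

/-- The leaf set of the tree. -/
def leaves : Finset (Fin T.n) := Finset.univ.filter fun v => T.IsLeaf v

/-- The internal (non-leaf) vertices; the root is internal. -/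
def internal : Finset (Fin T.n) := Finset.univ.filter fun v => ¬ T.IsLeaf v

/-- `L(v)`: the leaves descending from `v`. -/
def Ldesc (v : Fin T.n) : Finset (Fin T.n) := T.leaves.filter fun i => T.Anc v i

/-- Depth of a vertex: number of edges to the root. -/
def depth (v : Fin T.n) : ℕ := Nat.find (T.reach v)

/-- Number of vertices of the subtree rooted at `v`. -/
def subtreeSize (v : Fin T.n) : ℕ := (Finset.univ.filter fun u => T.Anc v u).card

/-- ORB-tree: the root has exactly one child and is not a leaf, and every other
internal vertex has exactly two children (so every vertex has degree 1 or 3). -/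
def IsORB : Prop :=
  ¬ T.IsLeaf T.root ∧ (T.children T.root).card = 1 ∧
  ∀ v, ¬ T.IsLeaf v → v ≠ T.root → (T.children v).card = 2

/-- The type of leaves. -/
abbrev Leaf := {i // i ∈ T.leaves}

/-- `δ_e` for the edge `e` above vertex `v`: the indicator vector of the leaves
descending from that edge. -/
def delta (v : Fin T.n) : T.Leaf → ℝ := fun i => if T.Anc v i.1 then 1 else 0

/-- The covariance matrix of the tree with branch lengths `ℓ`
(`ℓ v` is the length of the edge joining `v` to its parent):
`S = ∑_{e ∈ E} ℓ(e) δ_e δ_e'`.  Equivalently `S(i,j) = ∑_{e ∈ [i∧j,∘]} ℓ(e)`. -/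
def cov (ℓ : Fin T.n → ℝ) : Matrix T.Leaf T.Leaf ℝ :=
  ∑ v ∈ Finset.univ.filter (fun v => v ≠ T.root),
    ℓ v • Matrix.vecMulVec (T.delta v) (T.delta v)

/-- The trace branch length `ℓ*(i,v) = ∑_{e ∈ [i,v]} |L(e)| ℓ(e)`; the edge above `w`
lies on the path between `i` and `v` iff exactly one of `i`, `v` descends from `w`. -/
def lstar (ℓ : Fin T.n → ℝ) (i v : Fin T.n) : ℝ :=
  ∑ w ∈ Finset.univ.filter (fun w => w ≠ T.root ∧
      ((T.Anc w i ∧ ¬ T.Anc w v) ∨ (T.Anc w v ∧ ¬ T.Anc w i))),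
    ((T.Ldesc w).card : ℝ) * ℓ w

/-- `φ` is the family of Haar-like wavelets of `T`, indexed by internal vertices. -/
def IsHaarLike (φ : Fin T.n → T.Leaf → ℝ) : Prop :=
  (∀ i, φ T.root i = 1 / Real.sqrt ((T.leaves.card : ℝ))) ∧
  ∀ v ∈ T.internal, v ≠ T.root → ∃ c₀ c₁, c₀ ≠ c₁ ∧ T.children v = {c₀, c₁} ∧
    ∀ i : T.Leaf, φ v i =
      if i.1 ∈ T.Ldesc c₀ then
        Real.sqrt (((T.Ldesc c₁).card : ℝ) / (((T.Ldesc c₀).card : ℝ) * ((T.Ldesc v).card : ℝ)))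
      else if i.1 ∈ T.Ldesc c₁ then
        - Real.sqrt (((T.Ldesc c₀).card : ℝ) / (((T.Ldesc c₁).card : ℝ) * ((T.Ldesc v).card : ℝ)))
      else 0

/-- `T` is trace-balanced (at every non-root internal vertex). -/
def TraceBalanced (ℓ : Fin T.n → ℝ) : Prop :=
  ∀ v ∈ T.internal, v ≠ T.root → ∀ i ∈ T.Ldesc v, ∀ j ∈ T.Ldesc v,
    T.lstar ℓ i v = T.lstar ℓ j v

end RTree

namespace RTree

variable (T : RTree)

lemma iterate_root (k : ℕ) : T.parent^[k] T.root = T.root :=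
  Function.iterate_fixed T.parent_root k

lemma anc_refl (v : Fin T.n) : T.Anc v v := ⟨0, rfl⟩

lemma anc_root (v : Fin T.n) : T.Anc T.root v := T.reach v

lemma anc_trans {u v w : Fin T.n} (h1 : T.Anc u v) (h2 : T.Anc v w) : T.Anc u w := by
  obtain ⟨k, hk⟩ := h1; obtain ⟨j, hj⟩ := h2
  exact ⟨k + j, by rw [Function.iterate_add_apply, hj, hk]⟩

lemma eq_root_of_periodic {u : Fin T.n} {k : ℕ} (hk : 0 < k)
    (h : T.parent^[k] u = u) : u = T.root := by
  obtain ⟨m, hm⟩ := T.reach u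
  have hcyc : ∀ c, T.parent^[c * k] u = u := by
    intro c
    induction c with
    | zero => simp
    | succ c ih => rw [Nat.succ_mul, Function.iterate_add_apply, h, ih]
  have h1 : T.parent^[(m + 1) * k] u = u := hcyc (m + 1)
  have h2 : (m + 1) * k = ((m + 1) * k - m) + m := by
    have := Nat.le_mul_of_pos_right (m + 1) hk
    omega
  rw [h2, Function.iterate_add_apply, hm, iterate_root] at h1
  exact h1.symm

lemma anc_antisymm {u v : Fin T.n} (h1 : T.Anc u v) (h2 : T.Anc v u) : u = v := by
  obtain ⟨k, hk⟩ := h1; obtain ⟨j, hj⟩ := h2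
  rcases Nat.eq_zero_or_pos (j + k) with h0 | hpos
  · obtain ⟨hj0, hk0⟩ : j = 0 ∧ k = 0 := by omega
    subst hj0; subst hk0; simp only [Function.iterate_zero, id] at hk hj
    rw [← hk]
  · have hper : T.parent^[j + k] v = v := by
      rw [Function.iterate_add_apply, hk, hj]
    have hv : v = T.root := T.eq_root_of_periodic hpos hper
    subst hv
    rw [← hk, iterate_root]

lemma anc_total {u v i : Fin T.n} (hu : T.Anc u i) (hv : T.Anc v i) :
    T.Anc u v ∨ T.Anc v u := by
  obtain ⟨k, hk⟩ := hu; obtain ⟨j, hj⟩ := hv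
  rcases le_total k j with h | h
  · right
    exact ⟨j - k, by rw [← hk, ← Function.iterate_add_apply, Nat.sub_add_cancel h, hj]⟩
  · left
    exact ⟨k - j, by rw [← hj, ← Function.iterate_add_apply, Nat.sub_add_cancel h, hk]⟩

lemma iterate_depth (v : Fin T.n) : T.parent^[T.depth v] v = T.root :=
  Nat.find_spec (T.reach v)

lemma depth_min {v : Fin T.n} {k : ℕ} (h : k < T.depth v) : T.parent^[k] v ≠ T.root :=
  Nat.find_min (T.reach v) h

lemma anc_exists_le {u v : Fin T.n} (h : T.Anc u v) :
    ∃ k ≤ T.depth v, T.parent^[k] v = u := by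
  obtain ⟨k, hk⟩ := h
  rcases le_or_gt k (T.depth v) with h' | h'
  · exact ⟨k, h', hk⟩
  · refine ⟨T.depth v, le_refl _, ?_⟩
    rw [iterate_depth, ← hk, show k = (k - T.depth v) + T.depth v by omega,
      Function.iterate_add_apply, iterate_depth, iterate_root]

lemma card_anc (v : Fin T.n) :
    (Finset.univ.filter fun u => T.Anc u v).card = T.depth v + 1 := by
  have himg : Finset.univ.filter (fun u => T.Anc u v) =
      (Finset.range (T.depth v + 1)).image (fun k => T.parent^[k] v) := by
    ext u
    simp only [Finset.mem_filter, Finset.mem_univ, true_and, Finset.mem_image,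
      Finset.mem_range]
    constructor
    · intro h
      obtain ⟨k, hk, hku⟩ := T.anc_exists_le h
      exact ⟨k, by omega, hku⟩
    · rintro ⟨k, _, hk⟩
      exact ⟨k, hk⟩
  rw [himg, Finset.card_image_of_injOn, Finset.card_range]
  have key : ∀ a b, a ≤ b → b ≤ T.depth v → T.parent^[a] v = T.parent^[b] v → a = b := by
    intro a b hab hb hEq
    by_contra hne
    have hper : T.parent^[b - a] (T.parent^[a] v) = T.parent^[a] v := by
      rw [← Function.iterate_add_apply, Nat.sub_add_cancel hab, ← hEq]
    have hroot : T.parent^[a] v = T.root := T.eq_root_of_periodic (by omega) hper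
    exact T.depth_min (by omega : a < T.depth v) hroot
  intro a ha b hb hEq
  simp only [Finset.coe_range, Set.mem_Iio] at ha hb
  rcases le_total a b with h | h
  · exact key a b h (by omega) hEq
  · exact (key b a h (by omega) hEq.symm).symm

lemma mem_internal {u : Fin T.n} : u ∈ T.internal ↔ ¬ T.IsLeaf u := by
  simp [internal]

lemma mem_leaves {u : Fin T.n} : u ∈ T.leaves ↔ T.IsLeaf u := by
  simp [leaves]

lemma mem_children {c v : Fin T.n} : c ∈ T.children v ↔ T.parent c = v ∧ c ≠ T.root := by
  simp [children]

lemma anc_of_child {c v : Fin T.n} (h : c ∈ T.children v) : T.Anc v c :=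
  ⟨1, by simpa using (T.mem_children.mp h).1⟩

lemma eq_of_leaf_anc (hT : T.IsORB) {u v : Fin T.n} (hu : T.IsLeaf u)
    (h : T.Anc u v) : u = v := by
  by_contra hne
  obtain ⟨k, hk⟩ := h
  have hkpos : k ≠ 0 := by rintro rfl; exact hne hk.symm
  obtain ⟨k', rfl⟩ : ∃ k', k = k' + 1 := ⟨k - 1, by omega⟩
  set y := T.parent^[k'] v with hy
  have hpy : T.parent y = u := by
    rw [hy, ← Function.iterate_succ_apply' T.parent k' v]
    exact hk
  by_cases hyr : y = T.root
  · rw [hyr, T.parent_root] at hpy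
    exact hT.1 (hpy ▸ hu)
  · have : y ∈ T.children u := T.mem_children.mpr ⟨hpy, hyr⟩
    rw [hu] at this
    exact absurd this (Finset.notMem_empty y)

lemma internal_anc (hT : T.IsORB) {u w : Fin T.n} (hw : w ∈ T.internal)
    (h : T.Anc u w) : u ∈ T.internal := by
  rw [mem_internal]
  intro hleaf
  have := T.eq_of_leaf_anc hT hleaf h
  subst this
  exact (T.mem_internal.mp hw) hleaf

lemma card_anc_internal (hT : T.IsORB) {w : Fin T.n} (hw : w ∈ T.internal) :
    (T.internal.filter fun u => T.Anc u w).card = T.depth w + 1 := by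
  rw [← T.card_anc w]
  congr 1
  ext u
  simp only [Finset.mem_filter, Finset.mem_univ, true_and]
  exact ⟨fun h => h.2, fun h => ⟨T.internal_anc hT hw h, h⟩⟩

end RTree

namespace RTree

variable (T : RTree)

lemma root_internal (hT : T.IsORB) : T.root ∈ T.internal := T.mem_internal.mpr hT.1

lemma card_leaves_eq_card_internal (hT : T.IsORB) : T.leaves.card = T.internal.card := by
  have hsum : ∑ v : Fin T.n, (T.children v).card = T.n - 1 := by
    have : ∀ v : Fin T.n, (T.children v).card =
        ∑ u : Fin T.n, if T.parent u = v ∧ u ≠ T.root then 1 else 0 := by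
      intro v; rw [children, Finset.card_filter]
    simp_rw [this]
    rw [Finset.sum_comm]
    have hinner : ∀ u : Fin T.n,
        (∑ v : Fin T.n, if T.parent u = v ∧ u ≠ T.root then 1 else 0) =
          if u ≠ T.root then 1 else 0 := by
      intro u
      by_cases hu : u = T.root
      · simp [hu]
      · simp only [hu, ne_eq, not_false_eq_true, and_true, if_true]
        rw [Finset.sum_ite_eq Finset.univ (T.parent u) (fun _ => 1)]
        simp
    simp_rw [hinner]
    rw [← Finset.card_filter]
    have : Finset.univ.filter (fun u : Fin T.n => u ≠ T.root) =
        Finset.univ.erase T.root := by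
      ext u; simp [Finset.mem_erase]
    rw [this, Finset.card_erase_of_mem (Finset.mem_univ _)]
    simp
  have hsplit : ∑ v : Fin T.n, (T.children v).card =
      ∑ v ∈ T.internal, (T.children v).card := by
    rw [← Finset.sum_filter_add_sum_filter_not Finset.univ (fun v => ¬ T.IsLeaf v)
      (fun v => (T.children v).card)]
    have h2 : ∑ v ∈ Finset.univ.filter (fun v => ¬¬ T.IsLeaf v), (T.children v).card = 0 := by
      apply Finset.sum_eq_zero
      intro v hv
      simp only [Finset.mem_filter, not_not] at hv
      rw [hv.2]
      simp
    rw [h2, add_zero]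
    rfl
  have hint : ∑ v ∈ T.internal, (T.children v).card = 1 + 2 * (T.internal.card - 1) := by
    rw [← Finset.add_sum_erase _ _ (T.root_internal hT)]
    have : ∀ v ∈ T.internal.erase T.root, (T.children v).card = 2 := by
      intro v hv
      have := Finset.mem_erase.mp hv
      exact hT.2.2 v (T.mem_internal.mp this.2) this.1
    rw [Finset.sum_congr rfl this, Finset.sum_const, smul_eq_mul, hT.2.1,
      Finset.card_erase_of_mem (T.root_internal hT)]
    ring
  have hpart : T.internal.card + T.leaves.card = T.n := by
    have := Finset.card_filter_add_card_filter_not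
      (s := (Finset.univ : Finset (Fin T.n))) (p := fun v => ¬ T.IsLeaf v)
    simp only [Finset.card_univ, Fintype.card_fin] at this
    rw [internal, leaves]
    convert this using 2
    simp
  have hipos : 1 ≤ T.internal.card := Finset.card_pos.mpr ⟨T.root, T.root_internal hT⟩
  have hn := T.npos
  omega

lemma sum_isz (hT : T.IsORB) :
    ∑ u ∈ T.internal, (T.internal.filter fun w => T.Anc u w).card =
      ∑ w ∈ T.internal, (T.depth w + 1) := by
  have h1 : ∀ u ∈ T.internal, (T.internal.filter fun w => T.Anc u w).card =
      ∑ w ∈ T.internal, if T.Anc u w then 1 else 0 := by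
    intro u _; rw [Finset.card_filter]
  rw [Finset.sum_congr rfl h1, Finset.sum_comm]
  apply Finset.sum_congr rfl
  intro w hw
  rw [← Finset.card_filter, T.card_anc_internal hT hw]

end RTree

lemma sqrt_helper_aux (x y z : ℝ) (hx : 0 ≤ x) :
    x * Real.sqrt (y / (x * z)) = Real.sqrt (x * y / z) := by
  rcases eq_or_lt_of_le hx with h | hxpos
  · simp [← h]
  rcases eq_or_ne z 0 with hz | hz
  · simp [hz]
  rw [show x * Real.sqrt (y / (x * z)) = Real.sqrt (x ^ 2) * Real.sqrt (y / (x * z)) by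
      rw [Real.sqrt_sq hx],
    ← Real.sqrt_mul (sq_nonneg x)]
  congr 1
  field_simp

lemma sqrt_helper (x y z : ℝ) (hx : 0 ≤ x) (hy : 0 ≤ y) :
    x * Real.sqrt (y / (x * z)) = y * Real.sqrt (x / (y * z)) := by
  rw [sqrt_helper_aux x y z hx, sqrt_helper_aux y x z hy, mul_comm x y]

namespace RTree

variable (T : RTree)

lemma ldesc_subset (v : Fin T.n) : T.Ldesc v ⊆ T.leaves := Finset.filter_subset _ _

lemma anc_of_mem_ldesc {v i : Fin T.n} (h : i ∈ T.Ldesc v) : T.Anc v i :=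
  (Finset.mem_filter.mp h).2

lemma sibling_not_anc {c₀ c₁ v : Fin T.n} (h0 : c₀ ∈ T.children v)
    (h1 : c₁ ∈ T.children v) (hne : c₀ ≠ c₁) : ¬ T.Anc c₀ c₁ := by
  rintro ⟨k, hk⟩
  have hk0 : k ≠ 0 := by rintro rfl; exact hne (hk.symm)
  obtain ⟨k', rfl⟩ : ∃ k', k = k' + 1 := ⟨k - 1, by omega⟩
  have hp1 : T.parent c₁ = v := (T.mem_children.mp h1).1
  have hp0 : T.parent c₀ = v := (T.mem_children.mp h0).1
  have hc0 : c₀ = T.parent^[k'] v := by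
    rw [← hk, Function.iterate_succ_apply, hp1]
  have hper : T.parent^[k' + 1] v = v := by
    rw [Function.iterate_succ_apply', ← hc0, hp0]
  have hv : v = T.root := T.eq_root_of_periodic (by omega) hper
  apply (T.mem_children.mp h0).2
  rw [hc0, hv, iterate_root]

lemma ldesc_sibling_disjoint {c₀ c₁ v i : Fin T.n} (h0 : c₀ ∈ T.children v)
    (h1 : c₁ ∈ T.children v) (hne : c₀ ≠ c₁) (hi : i ∈ T.Ldesc c₀) :
    i ∉ T.Ldesc c₁ := by
  intro hi1
  rcases T.anc_total (T.anc_of_mem_ldesc hi) (T.anc_of_mem_ldesc hi1) with h | h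
  · exact T.sibling_not_anc h0 h1 hne h
  · exact T.sibling_not_anc h1 h0 hne.symm h

variable {φ : Fin T.n → T.Leaf → ℝ}

lemma phi_support (hφ : T.IsHaarLike φ) {v : Fin T.n} (hv : v ∈ T.internal)
    (hvr : v ≠ T.root) {i : T.Leaf} (h : φ v i ≠ 0) : T.Anc v i.1 := by
  obtain ⟨c₀, c₁, hne, hch, hval⟩ := hφ.2 v hv hvr
  have h0 : c₀ ∈ T.children v := by rw [hch]; simp
  have h1 : c₁ ∈ T.children v := by rw [hch]; simp
  rw [hval i] at h
  split_ifs at h with hi0 hi1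
  · exact T.anc_trans (T.anc_of_child h0) (T.anc_of_mem_ldesc hi0)
  · exact T.anc_trans (T.anc_of_child h1) (T.anc_of_mem_ldesc hi1)
  · exact absurd rfl h

lemma phi_sum_zero (hφ : T.IsHaarLike φ) {v : Fin T.n} (hv : v ∈ T.internal)
    (hvr : v ≠ T.root) : ∑ i : T.Leaf, φ v i = 0 := by
  obtain ⟨c₀, c₁, hne, hch, hval⟩ := hφ.2 v hv hvr
  have h0 : c₀ ∈ T.children v := by rw [hch]; simp
  have h1 : c₁ ∈ T.children v := by rw [hch]; simp
  set a := Real.sqrt (((T.Ldesc c₁).card : ℝ) /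
    (((T.Ldesc c₀).card : ℝ) * ((T.Ldesc v).card : ℝ))) with ha
  set b := Real.sqrt (((T.Ldesc c₀).card : ℝ) /
    (((T.Ldesc c₁).card : ℝ) * ((T.Ldesc v).card : ℝ))) with hb
  have hstep : ∑ i : T.Leaf, φ v i =
      ∑ x ∈ T.leaves, ((if x ∈ T.Ldesc c₀ then a else 0) +
        (if x ∈ T.Ldesc c₁ then -b else 0)) := by
    rw [Finset.univ_eq_attach, ← Finset.sum_attach T.leaves
      (fun x => (if x ∈ T.Ldesc c₀ then a else 0) + (if x ∈ T.Ldesc c₁ then -b else 0))]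
    apply Finset.sum_congr rfl
    intro i _
    rw [hval i]
    by_cases hi0 : i.1 ∈ T.Ldesc c₀
    · have hi1 : i.1 ∉ T.Ldesc c₁ := T.ldesc_sibling_disjoint h0 h1 hne hi0
      simp [hi0, hi1]
    · by_cases hi1 : i.1 ∈ T.Ldesc c₁ <;> simp [hi0, hi1]
  rw [hstep, Finset.sum_add_distrib, Finset.sum_ite_mem, Finset.sum_ite_mem,
    Finset.inter_eq_right.mpr (T.ldesc_subset c₀),
    Finset.inter_eq_right.mpr (T.ldesc_subset c₁),
    Finset.sum_const, Finset.sum_const, nsmul_eq_mul, nsmul_eq_mul]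
  have := sqrt_helper ((T.Ldesc c₀).card : ℝ) ((T.Ldesc c₁).card : ℝ)
    ((T.Ldesc v).card : ℝ) (Nat.cast_nonneg _) (Nat.cast_nonneg _)
  rw [← ha, ← hb] at this
  rw [this]
  ring

lemma A_full (hφ : T.IsHaarLike φ) {u w : Fin T.n} (hu : u ∈ T.internal)
    (hur : u ≠ T.root) (hw : T.Anc w u) :
    ∑ i : T.Leaf, φ u i * T.delta w i = 0 := by
  have : ∀ i : T.Leaf, φ u i * T.delta w i = φ u i := by
    intro i
    by_cases h : φ u i = 0
    · simp [h]
    · have hanc : T.Anc w i.1 := T.anc_trans hw (T.phi_support hφ hu hur h)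
      rw [delta, if_pos hanc, mul_one]
  rw [Finset.sum_congr rfl (fun i _ => this i)]
  exact T.phi_sum_zero hφ hu hur

lemma A_incomp (hφ : T.IsHaarLike φ) {u w : Fin T.n} (hu : u ∈ T.internal)
    (hur : u ≠ T.root) (h1 : ¬ T.Anc u w) (h2 : ¬ T.Anc w u) :
    ∑ i : T.Leaf, φ u i * T.delta w i = 0 := by
  apply Finset.sum_eq_zero
  intro i _
  by_cases h : φ u i = 0
  · simp [h]
  · have hanc : T.Anc u i.1 := T.phi_support hφ hu hur h
    have : ¬ T.Anc w i.1 := by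
      intro hw
      rcases T.anc_total hanc hw with h' | h' <;> [exact h1 h'; exact h2 h']
    rw [delta, if_neg this, mul_zero]

end RTree

namespace RTree

variable (T : RTree) {φ : Fin T.n → T.Leaf → ℝ}

lemma M_factor (ℓ : Fin T.n → ℝ) (φ : Fin T.n → T.Leaf → ℝ) (u v : Fin T.n) :
    (∑ j : T.Leaf, ∑ i : T.Leaf, φ u j * T.cov ℓ j i * φ v i) =
      ∑ w ∈ Finset.univ.filter (fun w => w ≠ T.root),
        ℓ w * ((∑ j : T.Leaf, φ u j * T.delta w j) *
          (∑ i : T.Leaf, φ v i * T.delta w i)) := by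
  unfold cov
  simp only [Matrix.sum_apply, Matrix.smul_apply, Matrix.vecMulVec_apply, smul_eq_mul,
    Finset.mul_sum, Finset.sum_mul]
  rw [show (∑ j : T.Leaf, ∑ i : T.Leaf, ∑ w ∈ Finset.univ.filter (fun w => w ≠ T.root),
      φ u j * (ℓ w * (T.delta w j * T.delta w i)) * φ v i) =
      ∑ w ∈ Finset.univ.filter (fun w => w ≠ T.root), ∑ j : T.Leaf, ∑ i : T.Leaf,
      φ u j * (ℓ w * (T.delta w j * T.delta w i)) * φ v i from
    (Finset.sum_congr rfl fun j _ => Finset.sum_comm).trans Finset.sum_comm]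
  refine Finset.sum_congr rfl fun w _ => ?_
  conv_rhs => rw [Finset.sum_comm]
  refine Finset.sum_congr rfl fun j _ => ?_
  refine Finset.sum_congr rfl fun i _ => ?_
  ring

lemma M_zero (hT : T.IsORB) (hφ : T.IsHaarLike φ) (ℓ : Fin T.n → ℝ) {u v : Fin T.n}
    (hu : u ∈ T.internal) (hv : v ∈ T.internal)
    (h1 : ¬ T.Anc u v) (h2 : ¬ T.Anc v u) :
    (∑ j : T.Leaf, ∑ i : T.Leaf, φ u j * T.cov ℓ j i * φ v i) = 0 := by
  have hur : u ≠ T.root := by rintro rfl; exact h1 (T.anc_root v)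
  have hvr : v ≠ T.root := by rintro rfl; exact h2 (T.anc_root u)
  rw [T.M_factor ℓ φ u v]
  apply Finset.sum_eq_zero
  intro w hw
  by_cases hwu : T.Anc w u
  · rw [T.A_full hφ hu hur hwu]
    ring
  by_cases hwv : T.Anc w v
  · rw [T.A_full hφ hv hvr hwv]
    ring
  by_cases huw : T.Anc u w
  · have hvw : ¬ T.Anc v w := by
      intro h
      rcases T.anc_total huw h with h' | h' <;> [exact h1 h'; exact h2 h']
    rw [T.A_incomp hφ hv hvr hvw hwv]
    ring
  · rw [T.A_incomp hφ hu hur huw hwu]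
    ring

end RTree

lemma zeta_alg2 (n t : ℝ) (hn : 0 < n) :
    1 + 1 / n - 2 * ((t + n) / n) / n = 1 - 1 / n - 2 * t / n ^ 2 := by
  field_simp
  ring

/-- The fraction `ζ` of vanishing entries in `Φ'SΦ` satisfies
`ζ ≥ 1 + 1/|L| - 2 avg(T̊)/|T̊| = 1 - 1/|L| - 2 TPL(T̊)/|T̊|²`, where `T̊` is the
interior of `T` (its vertex set is the set of internal nodes of `T`). -/
theorem zeta_lower_bound (T : RTree) (hT : T.IsORB) (ℓ : Fin T.n → ℝ)
    (hℓ : ∀ v, 0 ≤ ℓ v) (hℓpos : ∀ v, T.IsLeaf v → 0 < ℓ v)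
    (φ : Fin T.n → T.Leaf → ℝ) (hφ : T.IsHaarLike φ) :
    -- entries of Φ'SΦ, indexed by pairs of internal nodes
    let M : Fin T.n → Fin T.n → ℝ :=
      fun u v => ∑ j : T.Leaf, ∑ i : T.Leaf, φ u j * T.cov ℓ j i * φ v i
    -- fraction of vanishing entries
    let ζ : ℝ := (((T.internal ×ˢ T.internal).filter fun p => M p.1 p.2 = 0).card : ℝ) /
      ((T.internal.card : ℝ)) ^ 2
    -- size of the subtree of the interior T̊ rooted at an internal node u
    let isz : Fin T.n → ℕ := fun u => (T.internal.filter fun w => T.Anc u w).card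
    -- average subtree size of the interior
    let avgI : ℝ := (∑ u ∈ T.internal, (isz u : ℝ)) / (T.internal.card : ℝ)
    -- total path length of the interior
    let tplI : ℝ := ∑ u ∈ T.internal, (T.depth u : ℝ)
    ζ ≥ 1 + 1 / (T.leaves.card : ℝ) - 2 * avgI / (T.internal.card : ℝ) ∧
      1 + 1 / (T.leaves.card : ℝ) - 2 * avgI / (T.internal.card : ℝ)
        = 1 - 1 / (T.leaves.card : ℝ) - 2 * tplI / ((T.internal.card : ℝ)) ^ 2 := by
  intro M ζ isz avgI tplI
  have hroot := T.root_internal hT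
  have hIpos : 0 < T.internal.card := Finset.card_pos.mpr ⟨T.root, hroot⟩
  have hLI : T.leaves.card = T.internal.card := T.card_leaves_eq_card_internal hT
  set P := (T.internal ×ˢ T.internal).filter (fun p => M p.1 p.2 = 0) with hP
  set C₁ := (T.internal ×ˢ T.internal).filter
    (fun p : Fin T.n × Fin T.n => T.Anc p.1 p.2) with hC1
  set C₂ := (T.internal ×ˢ T.internal).filter
    (fun p : Fin T.n × Fin T.n => T.Anc p.2 p.1) with hC2
  set C := (T.internal ×ˢ T.internal).filter
    (fun p : Fin T.n × Fin T.n => T.Anc p.1 p.2 ∨ T.Anc p.2 p.1) with hC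
  set Q := (T.internal ×ˢ T.internal).filter
    (fun p : Fin T.n × Fin T.n => ¬(T.Anc p.1 p.2 ∨ T.Anc p.2 p.1)) with hQ
  set N : ℕ := ∑ u ∈ T.internal, isz u with hN
  -- C₁.card = N
  have hc1 : C₁.card = N := by
    rw [hC1, Finset.card_filter, Finset.sum_product, hN]
    exact Finset.sum_congr rfl fun u _ => (Finset.card_filter _ _).symm
  have hc2 : C₂.card = N := by
    rw [hC2, Finset.card_filter, Finset.sum_product, Finset.sum_comm, hN]
    exact Finset.sum_congr rfl fun u _ => (Finset.card_filter _ _).symm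
  have hQC : C.card + Q.card = T.internal.card ^ 2 := by
    have h := Finset.card_filter_add_card_filter_not
      (s := T.internal ×ˢ T.internal)
      (p := fun p : Fin T.n × Fin T.n => T.Anc p.1 p.2 ∨ T.Anc p.2 p.1)
    rw [Finset.card_product] at h
    rw [hC, hQ]
    rw [sq]
    exact h
  have hunion : C.card + (C₁ ∩ C₂).card = C₁.card + C₂.card := by
    rw [hC, hC1, hC2, Finset.filter_or]
    exact Finset.card_union_add_card_inter _ _
  have hdiag : T.internal.card ≤ (C₁ ∩ C₂).card := by
    apply Finset.card_le_card_of_injOn (fun u => (u, u))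
    · intro u hu
      simp only [Finset.mem_coe, hC1, hC2, Finset.mem_inter, Finset.mem_filter, Finset.mem_product]
      exact ⟨⟨⟨hu, hu⟩, T.anc_refl u⟩, ⟨⟨hu, hu⟩, T.anc_refl u⟩⟩
    · intro a _ b _ h
      exact congrArg Prod.fst h
  have hQP : Q.card ≤ P.card := by
    apply Finset.card_le_card
    intro p hp
    rw [hQ, Finset.mem_filter] at hp
    rw [hP, Finset.mem_filter]
    refine ⟨hp.1, ?_⟩
    have hmem := Finset.mem_product.mp hp.1
    push_neg at hp
    exact T.M_zero hT hφ ℓ hmem.1 hmem.2 hp.2.1 hp.2.2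
  have hkey : T.internal.card ^ 2 + T.internal.card ≤ P.card + 2 * N := by omega
  have hnR : (0 : ℝ) < (T.internal.card : ℝ) := by exact_mod_cast hIpos
  have hLn : (T.leaves.card : ℝ) = (T.internal.card : ℝ) := by exact_mod_cast hLI
  have havg : avgI = (N : ℝ) / (T.internal.card : ℝ) := by
    show (∑ u ∈ T.internal, (isz u : ℝ)) / (T.internal.card : ℝ) = _
    rw [hN]
    push_cast
    rfl
  have hsumN : (N : ℝ) = tplI + (T.internal.card : ℝ) := by
    have h1 : N = ∑ w ∈ T.internal, (T.depth w + 1) := by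
      rw [hN]
      exact T.sum_isz hT
    have h2 : tplI = ∑ u ∈ T.internal, (T.depth u : ℝ) := rfl
    rw [h1, h2]
    push_cast
    rw [Finset.sum_add_distrib, Finset.sum_const, nsmul_eq_mul, mul_one]
  constructor
  · show ((P.card : ℝ)) / ((T.internal.card : ℝ)) ^ 2 ≥
      1 + 1 / (T.leaves.card : ℝ) - 2 * avgI / (T.internal.card : ℝ)
    rw [havg, hLn, ge_iff_le]
    have hform : 1 + 1 / (T.internal.card : ℝ) -
        2 * ((N : ℝ) / (T.internal.card : ℝ)) / (T.internal.card : ℝ) =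
        (((T.internal.card : ℝ)) ^ 2 + (T.internal.card : ℝ) - 2 * (N : ℝ)) /
          ((T.internal.card : ℝ)) ^ 2 := by
      field_simp
    rw [hform]
    have hcast : ((T.internal.card : ℝ)) ^ 2 + (T.internal.card : ℝ) ≤
        (P.card : ℝ) + 2 * (N : ℝ) := by exact_mod_cast hkey
    gcongr
    linarith
  · rw [havg, hLn, hsumN]
    exact zeta_alg2 _ tplI hnR
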